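/- Let b_i(x) = -c_i/(2(⟨c',x⟩ + c)) with c' ∈ ℝⁿ \ {0}, c ∈ ℝ, and β(x,y) = ∑ b_i(x) y^i. Then the Ricci scalar of the deformed spray S = S₀ - 2βC satisfies Ric(x,y) = (n-1)(β² - S₀β)(x,y) = -(n-1) ⟨c',y⟩² / (4(⟨c',x⟩+c)²), which is nonzero whenever n ≥ 2 and ⟨c',y⟩ ≠ 0. -/

import Mathlib

open Finset

/-- Partial derivative of `f` with respect to the `i`-th coordinate at `x`. -/
noncomputable def pd {n : ℕ} (i : Fin n) (f : (Fin n → ℝ) → ℝ) (x : Fin n → ℝ) : ℝ :=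
  deriv (fun t => f (Function.update x i t)) (x i)

/-- Partial derivative with respect to the `i`-th `x`-coordinate. -/
noncomputable def pdx {n : ℕ} (i : Fin n) (f : (Fin n → ℝ) → (Fin n → ℝ) → ℝ)
    (x y : Fin n → ℝ) : ℝ :=
  deriv (fun t => f (Function.update x i t) y) (x i)

/-- Partial derivative with respect to the `i`-th `y`-coordinate. -/
noncomputable def pdy {n : ℕ} (i : Fin n) (f : (Fin n → ℝ) → (Fin n → ℝ) → ℝ)
    (x y : Fin n → ℝ) : ℝ :=
  deriv (fun t => f x (Function.update y i t)) (y i)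

/-- The Ricci scalar of the deformation by `β` with `b_i = -c_i/(2(⟨c',x⟩+c))` is
`-(n-1)⟨c',y⟩²/(4(⟨c',x⟩+c)²)`, nonzero whenever `⟨c',y⟩ ≠ 0`. -/
theorem stmt10 (n : ℕ) (hn : 2 ≤ n) (c' : Fin n → ℝ) (hc' : c' ≠ 0) (c : ℝ)
    (b : Fin n → (Fin n → ℝ) → ℝ)
    (hb : ∀ k x, b k x = -(c' k) / (2 * ((∑ i, c' i * x i) + c)))
    (β : (Fin n → ℝ) → (Fin n → ℝ) → ℝ)
    (hβ : ∀ x y, β x y = ∑ k, b k x * y k) :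
    ∀ x y : Fin n → ℝ, 0 < (∑ i, c' i * x i) + c →
      ((n : ℝ) - 1) * ((β x y) ^ 2 - ∑ k, y k * pdx k β x y) =
        -((n : ℝ) - 1) * (∑ k, c' k * y k) ^ 2 / (4 * ((∑ i, c' i * x i) + c) ^ 2) ∧
      ((∑ k, c' k * y k) ≠ 0 →
        ((n : ℝ) - 1) * ((β x y) ^ 2 - ∑ k, y k * pdx k β x y) ≠ 0) := by
  intro x y hA
  set A : ℝ := (∑ i, c' i * x i) + c with hAdef
  set P : ℝ := ∑ k, c' k * y k with hPdef
  have hA0 : A ≠ 0 := ne_of_gt hA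
  -- value of β
  have hβval : β x y = -P / (2 * A) := by
    rw [hβ]
    simp only [hb]
    rw [show (∑ k, -(c' k) / (2 * A) * y k) = (∑ k, c' k * y k) * (-(2 * A)⁻¹) by
      rw [Finset.sum_mul]; exact Finset.sum_congr rfl fun k _ => by ring]
    field_simp
    rfl
  -- partial derivatives
  have key : ∀ k : Fin n, pdx k β x y = P * c' k / (2 * A ^ 2) := by
    intro k
    set R : ℝ := (∑ i ∈ Finset.univ.erase k, c' i * x i) + c with hRdef
    have hsum : ∀ t : ℝ, (∑ i, c' i * Function.update x k t i) + c = c' k * t + R := by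
      intro t
      have hfn : (fun i => c' i * Function.update x k t i)
          = Function.update (fun i => c' i * x i) k (c' k * t) := by
        funext i
        rcases eq_or_ne i k with h | h
        · subst h; simp
        · simp [Function.update, h]
      rw [hfn, Finset.sum_update_of_mem (Finset.mem_univ k), hRdef, ← Finset.erase_eq]
      ring
    have hAR : c' k * x k + R = A := by
      have := hsum (x k)
      rw [Function.update_eq_self] at this
      rw [hAdef]
      exact this.symm
    have hfun : (fun t => β (Function.update x k t) y)
        = fun t => -P * (2 * (c' k * t + R))⁻¹ := by
      funext t
      rw [hβ]
      simp only [hb]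
      rw [hsum t]
      rw [show (∑ j, -(c' j) / (2 * (c' k * t + R)) * y j)
          = (∑ j, c' j * y j) * (-(2 * (c' k * t + R))⁻¹) by
        rw [Finset.sum_mul]; exact Finset.sum_congr rfl fun j _ => by ring]
      rw [← hPdef]; ring
    have hD : 2 * (c' k * x k + R) ≠ 0 := by
      rw [hAR]; positivity
    have h1 : HasDerivAt (fun t : ℝ => 2 * (c' k * t + R)) (2 * c' k) (x k) := by
      have := (((hasDerivAt_id (x k)).const_mul (c' k)).add_const R).const_mul (2 : ℝ)
      simpa using this
    have h2 : HasDerivAt (fun t : ℝ => -P * (2 * (c' k * t + R))⁻¹)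
        (-P * (-(2 * c' k) / (2 * (c' k * x k + R)) ^ 2)) (x k) :=
      (h1.inv hD).const_mul (-P)
    rw [pdx, hfun, h2.deriv, hAR]
    field_simp
  have hsum2 : (∑ k, y k * pdx k β x y) = P ^ 2 / (2 * A ^ 2) := by
    rw [show (∑ k, y k * pdx k β x y) = ∑ k, (c' k * y k) * (P / (2 * A ^ 2)) by
      exact Finset.sum_congr rfl fun k _ => by rw [key k]; ring]
    rw [← Finset.sum_mul, ← hPdef]
    ring
  have hmain : ((n : ℝ) - 1) * ((β x y) ^ 2 - ∑ k, y k * pdx k β x y)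
      = -((n : ℝ) - 1) * P ^ 2 / (4 * A ^ 2) := by
    rw [hβval, hsum2]
    field_simp
    ring
  refine ⟨hmain, fun hP => ?_⟩
  rw [hmain]
  have hn1 : (0 : ℝ) < (n : ℝ) - 1 := by
    have : (2 : ℝ) ≤ (n : ℝ) := by exact_mod_cast hn
    linarith
  have : -((n : ℝ) - 1) * P ^ 2 < 0 := by
    have hP2 : 0 < P ^ 2 := by positivity
    nlinarith
  intro h
  rw [div_eq_zero_iff] at h
  rcases h with h | h
  · linarith
  · have : (0 : ℝ) < 4 * A ^ 2 := by positivity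
    linarith
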